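/- Let I ⊆ R = K[x_0,...,x_n] be a saturated stable monomial ideal with minimal monomial generators x^{A_1},...,x^{A_r}; set l_i = max{ j : x_j divides x^{A_i} } and d_i = deg x^{A_i}. Then the Hilbert polynomial of R/I equals C(z+n, n) − Σ_{i=1}^r C(z+n−d_i−l_i, n−l_i). -/

import Mathlib

open MvPolynomial
open Fin.NatCast

noncomputable section

/-- The polynomial ring `K[x_0,…,x_n]` in `n+1` variables. -/
abbrev PR (K : Type*) [Field K] (n : ℕ) := MvPolynomial (Fin (n+1)) K

variable {K : Type*} [Field K] {n : ℕ}

/-- The monomial `x^A`. -/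
def mon (A : Fin (n+1) →₀ ℕ) : PR K n := monomial A 1

/-- Total degree of the monomial with exponent vector `A`. -/
def mdeg (A : Fin (n+1) →₀ ℕ) : ℕ := ∑ i, A i

/-- The largest index of a variable dividing `x^A` (0 if `A = 0`). -/
def maxIdx (A : Fin (n+1) →₀ ℕ) : Fin (n+1) := (A.support.max).unbotD 0

/-- The exponent vector of `(x_i / x_j) · x^A`. -/
def shiftM (A : Fin (n+1) →₀ ℕ) (i j : Fin (n+1)) : Fin (n+1) →₀ ℕ :=
  A + Finsupp.single i 1 - Finsupp.single j 1

/-- `I` is a monomial ideal: generated by a set of monomials. -/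
def IsMonomialIdeal (I : Ideal (PR K n)) : Prop :=
  ∃ S : Set (Fin (n+1) →₀ ℕ), I = Ideal.span ((fun A => (mon A : PR K n)) '' S)

/-- Strongly stable monomial ideal. -/
def StronglyStable (I : Ideal (PR K n)) : Prop :=
  ∀ A : Fin (n+1) →₀ ℕ, mon A ∈ I → ∀ i j : Fin (n+1), A j ≠ 0 → i < j →
    mon (shiftM A i j) ∈ I

/-- Stable monomial ideal. -/
def Stable (I : Ideal (PR K n)) : Prop :=
  ∀ A : Fin (n+1) →₀ ℕ, A ≠ 0 → mon A ∈ I → ∀ i : Fin (n+1), i < maxIdx A →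
    mon (shiftM A i (maxIdx A)) ∈ I

/-- `x^A` is a minimal monomial generator of `I`. -/
def MinGen (I : Ideal (PR K n)) (A : Fin (n+1) →₀ ℕ) : Prop :=
  mon A ∈ I ∧ ∀ B : Fin (n+1) →₀ ℕ, B ≤ A → B ≠ A → mon B ∉ I

/-- The set of exponent vectors of minimal monomial generators of `I`. -/
def Gens (I : Ideal (PR K n)) : Set (Fin (n+1) →₀ ℕ) := {A | MinGen I A}

/-- The irrelevant maximal ideal `(x_0,…,x_n)`. -/
def irrIdeal (K : Type*) [Field K] (n : ℕ) : Ideal (PR K n) :=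
  Ideal.span (Set.range fun i : Fin (n+1) => (X i : PR K n))

/-- `I` is saturated: `(I : (x_0,…,x_n)) = I`. -/
def Saturated (I : Ideal (PR K n)) : Prop :=
  Submodule.colon I (irrIdeal K n) = I

/-- The saturation `∪ₖ (I : (x_0,…,x_n)^k)`. -/
def saturationOf (I : Ideal (PR K n)) : Ideal (PR K n) :=
  ⨆ k : ℕ, Submodule.colon I (((irrIdeal K n) ^ k : Ideal (PR K n)) : Set (PR K n))

/-- The Hilbert function of `R/I`: `j ↦ dim_K [R/I]_j`. -/
def hilbF {σ : Type*} (I : Ideal (MvPolynomial σ K)) (j : ℕ) : ℕ :=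
  Module.finrank K
    ((homogeneousSubmodule σ K j).map (Ideal.Quotient.mkₐ K I).toLinearMap)

/-- `p` is the Hilbert polynomial of `R/I`. -/
def IsHilbPoly {σ : Type*} (I : Ideal (MvPolynomial σ K)) (p : Polynomial ℚ) : Prop :=
  ∃ N : ℕ, ∀ j : ℕ, N ≤ j → p.eval (j : ℚ) = (hilbF I j : ℚ)

/-- The binomial-coefficient polynomial `C(q, k) = q(q-1)⋯(q-k+1)/k!`. -/
def choosePoly (q : Polynomial ℚ) (k : ℕ) : Polynomial ℚ :=
  ((k.factorial : ℚ))⁻¹ • ∏ j ∈ Finset.range k, (q - Polynomial.C (j : ℚ))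

/-- The canonical representation `p(z) = Σ_{i=0}^d [C(z+i,i+1) − C(z+i−b_i,i+1)]`. -/
def canonicalHP (d : ℕ) (b : ℕ → ℕ) : Polynomial ℚ :=
  ∑ i ∈ Finset.range (d+1),
    (choosePoly (Polynomial.X + Polynomial.C (i : ℚ)) (i+1)
      - choosePoly (Polynomial.X + Polynomial.C (i : ℚ) - Polynomial.C (b i : ℚ)) (i+1))

/-- `x^A >_lex x^B`. -/
def LexGt (A B : Fin (n+1) →₀ ℕ) : Prop :=
  ∃ i : Fin (n+1), (∀ j : Fin (n+1), j < i → A j = B j) ∧ B i < A i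

/-- `I` is a lexsegment ideal. -/
def IsLexsegment (I : Ideal (PR K n)) : Prop :=
  IsMonomialIdeal I ∧ ∀ A B : Fin (n+1) →₀ ℕ, mdeg A = mdeg B → mon B ∈ I →
    LexGt A B → mon A ∈ I

/-- `I` is a homogeneous ideal. -/
def Homog (I : Ideal (PR K n)) : Prop :=
  ∀ f ∈ I, ∀ j : ℕ, homogeneousComponent j f ∈ I

/-- The set of right-shifts of `x^A`. -/
def rightShifts (A : Fin (n+1) →₀ ℕ) : Set (Fin (n+1) →₀ ℕ) :=
  {B | ∃ i : Fin (n+1), (i : ℕ) + 2 ≤ n ∧ A i ≠ 0 ∧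
    B = shiftM A ((((i : ℕ) + 1 : ℕ)) : Fin (n+1)) i}

/-- The set of left-shifts of `x^A`. -/
def leftShifts (A : Fin (n+1) →₀ ℕ) : Set (Fin (n+1) →₀ ℕ) :=
  {B | ∃ i : Fin (n+1), 1 ≤ (i : ℕ) ∧ (i : ℕ) + 1 ≤ n ∧ A i ≠ 0 ∧
    B = shiftM A ((((i : ℕ) - 1 : ℕ)) : Fin (n+1)) i}

/-- The monomials `x^A x_r, …, x^A x_{n-1}` with `r = max(x^A)`. -/
def expSet (A : Fin (n+1) →₀ ℕ) : Set (Fin (n+1) →₀ ℕ) :=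
  {B | ∃ j : Fin (n+1), ((maxIdx A : ℕ)) ≤ (j : ℕ) ∧ (j : ℕ) + 1 ≤ n ∧
    B = A + Finsupp.single j 1}

/-- `x^A ≠ 1` is expandable in `I`. -/
def Expandable (I : Ideal (PR K n)) (A : Fin (n+1) →₀ ℕ) : Prop :=
  A ≠ 0 ∧ MinGen I A ∧ ∀ B ∈ rightShifts A, ¬ MinGen I B

/-- `x^A ≠ 1` is contractible in `I`. -/
def Contractible (I : Ideal (PR K n)) (A : Fin (n+1) →₀ ℕ) : Prop :=
  A ≠ 0 ∧ mon A ∉ I ∧ MinGen I (A + Finsupp.single (((n - 1 : ℕ)) : Fin (n+1)) 1) ∧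
    ∀ B ∈ leftShifts A, mon B ∈ I

/-- The expansion of `x^A` in `I`. -/
def expansionIdeal (I : Ideal (PR K n)) (A : Fin (n+1) →₀ ℕ) : Ideal (PR K n) :=
  Ideal.span ((fun B => (mon B : PR K n)) '' ((Gens I \ {A}) ∪ expSet A))

/-- The contraction of `x^A` in `I`. -/
def contractionIdeal (I : Ideal (PR K n)) (A : Fin (n+1) →₀ ℕ) : Ideal (PR K n) :=
  Ideal.span ((fun B => (mon B : PR K n)) '' ((Gens I ∪ {A}) \ expSet A))

/-- Setting `x_{n-1} = x_n = 1` in the exponent vector `A`. -/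
def stripLastTwo (A : Fin (n+1) →₀ ℕ) : Fin (n+1) →₀ ℕ :=
  Finsupp.update (Finsupp.update A (((n : ℕ)) : Fin (n+1)) 0) (((n - 1 : ℕ)) : Fin (n+1)) 0

/-- The double saturation `sat_{x_{n-1},x_n}(I)` (as an ideal of `R`). -/
def doubleSat (I : Ideal (PR K n)) : Ideal (PR K n) :=
  Ideal.span ((fun A => (mon (stripLastTwo A) : PR K n)) '' Gens I)

/-- Restriction of an exponent vector to the first `n` variables. -/
def restrictExp (A : Fin (n+1) →₀ ℕ) : Fin n →₀ ℕ :=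
  Finsupp.comapDomain Fin.castSucc A (Fin.castSucc_injective n).injOn

/-- The ideal `I · R^{(1)}` in `K[x_0,…,x_{n-1}]` (for saturated monomial `I`). -/
def restrictIdeal (I : Ideal (PR K n)) : Ideal (MvPolynomial (Fin n) K) :=
  Ideal.span ((fun A => (monomial (restrictExp A) (1 : K) : MvPolynomial (Fin n) K)) '' Gens I)

/-- Lex order on exponent vectors in `n` variables. -/
def LexGt' (A B : Fin n →₀ ℕ) : Prop :=
  ∃ i : Fin n, (∀ j : Fin n, j < i → A j = B j) ∧ B i < A i

/-- Monomial ideal in `K[x_0,…,x_{n-1}]`. -/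
def IsMonomialIdeal' (I : Ideal (MvPolynomial (Fin n) K)) : Prop :=
  ∃ S : Set (Fin n →₀ ℕ),
    I = Ideal.span ((fun A => (monomial A (1 : K) : MvPolynomial (Fin n) K)) '' S)

/-- Lexsegment ideal in `K[x_0,…,x_{n-1}]`. -/
def IsLexsegment' (I : Ideal (MvPolynomial (Fin n) K)) : Prop :=
  IsMonomialIdeal' I ∧ ∀ A B : Fin n →₀ ℕ, (∑ i, A i) = (∑ i, B i) →
    monomial B (1 : K) ∈ I → LexGt' A B → monomial A (1 : K) ∈ I

/-- `I` is almost lexsegment: saturated strongly stable with `I·R^{(1)}` lexsegment. -/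
def AlmostLex (I : Ideal (PR K n)) : Prop :=
  IsMonomialIdeal I ∧ StronglyStable I ∧ Saturated I ∧ IsLexsegment' (restrictIdeal I)

/-- A graded free resolution of the ideal `I`, with `rank i` the rank of the `i`-th
free module and `twist i k` the degrees of the standard basis elements. -/
structure GradedFreeRes (I : Ideal (PR K n)) where
  rank : ℕ → ℕ
  twist : (i : ℕ) → Fin (rank i) → ℕ
  diff : (i : ℕ) → ((Fin (rank (i+1)) → PR K n) →ₗ[PR K n] (Fin (rank i) → PR K n))
  aug : (Fin (rank 0) → PR K n) →ₗ[PR K n] PR K n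
  aug_range : LinearMap.range aug = I
  aug_graded : ∀ k, aug (Pi.single k 1) ∈ homogeneousSubmodule (Fin (n+1)) K (twist 0 k)
  diff_graded : ∀ i k l, diff i (Pi.single k 1) l = 0 ∨
    (twist i l ≤ twist (i+1) k ∧
      diff i (Pi.single k 1) l ∈ homogeneousSubmodule (Fin (n+1)) K (twist (i+1) k - twist i l))
  exact_aug : LinearMap.range (diff 0) = LinearMap.ker aug
  exact_diff : ∀ i, LinearMap.range (diff (i+1)) = LinearMap.ker (diff i)

/-- A resolution is minimal if all differential entries lie in the irrelevant ideal. -/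
def MinimalRes {I : Ideal (PR K n)} (F : GradedFreeRes I) : Prop :=
  ∀ i k l, constantCoeff (F.diff i (Pi.single k 1) l) = 0

end

section EKProof
open Finset
variable {K : Type*} [Field K] {n : ℕ}

lemma EK.mon_mul_mon (a b : Fin (n+1) →₀ ℕ) :
    (mon a : PR K n) * mon b = mon (a + b) := by
  simp [mon, monomial_mul]

lemma EK.mon_mem_of_le {I : Ideal (PR K n)} {a b : Fin (n+1) →₀ ℕ}
    (h : (mon a : PR K n) ∈ I) (hab : a ≤ b) : (mon b : PR K n) ∈ I := by
  have hb : (mon b : PR K n) = mon (b - a) * mon a := by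
    rw [EK.mon_mul_mon, tsub_add_cancel_of_le hab]
  rw [hb]; exact I.mul_mem_left _ h

lemma EK.range_eq {r : ℕ} (A : Fin r → (Fin (n+1) →₀ ℕ)) :
    (Set.range fun i => (mon (A i) : PR K n)) = (fun s => monomial s (1:K)) '' Set.range A := by
  rw [← Set.range_comp]; rfl

lemma EK.mon_mem_span_iff {r : ℕ} (A : Fin r → (Fin (n+1) →₀ ℕ)) (B : Fin (n+1) →₀ ℕ) :
    (mon B : PR K n) ∈ Ideal.span (Set.range fun i => (mon (A i) : PR K n)) ↔ ∃ i, A i ≤ B := by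
  rw [EK.range_eq, MvPolynomial.mem_ideal_span_monomial_image]
  simp [mon, MvPolynomial.support_monomial]

lemma EK.maxIdx_le {B : Fin (n+1) →₀ ℕ} {t : Fin (n+1)}
    (h : ∀ u, B u ≠ 0 → u ≤ t) : maxIdx B ≤ t := by
  unfold maxIdx
  cases hm : B.support.max with
  | bot => simpa using Fin.zero_le t
  | coe m =>
    have hmem : m ∈ B.support := Finset.mem_of_max hm
    simpa using h m (Finsupp.mem_support_iff.1 hmem)

lemma EK.le_maxIdx {B : Fin (n+1) →₀ ℕ} {t : Fin (n+1)} (h : B t ≠ 0) :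
    t ≤ maxIdx B := by
  have ht : t ∈ B.support := Finsupp.mem_support_iff.2 h
  have h1 := Finset.le_max ht
  unfold maxIdx
  cases hm : B.support.max with
  | bot => rw [hm] at h1; exact absurd h1 (by simp)
  | coe m => rw [hm] at h1; simpa using h1

lemma EK.apply_maxIdx_ne_zero {B : Fin (n+1) →₀ ℕ} (hB : B ≠ 0) :
    B (maxIdx B) ≠ 0 := by
  have hne : B.support.Nonempty := Finsupp.support_nonempty_iff.2 hB
  obtain ⟨m, hm⟩ := Finset.max_of_nonempty hne
  have : maxIdx B = m := by unfold maxIdx; rw [hm]; rfl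
  rw [this]
  exact Finsupp.mem_support_iff.1 (Finset.mem_of_max hm)

lemma EK.eq_zero_of_maxIdx_lt {B : Fin (n+1) →₀ ℕ} {t : Fin (n+1)} (h : maxIdx B < t) :
    B t = 0 := by
  by_contra hb
  exact absurd (EK.le_maxIdx hb) (not_le.2 h)

lemma EK.sum_le_sum {a b : Fin (n+1) →₀ ℕ} (h : a ≤ b) :
    (∑ t, a t) ≤ ∑ t, b t :=
  Finset.sum_le_sum fun t _ => Finsupp.le_def.1 h t

lemma EK.eq_zero_of_sum_eq_zero {a : Fin (n+1) →₀ ℕ} (h : (∑ t, a t) = 0) : a = 0 := by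
  ext t
  exact Finset.sum_eq_zero_iff.1 h t (Finset.mem_univ t)

end EKProof
section EKProof2
open Finset
variable {K : Type*} [Field K] {n : ℕ}

lemma EK.exists_gen {I : Ideal (PR K n)} (hstab : Stable I)
    {B : Fin (n+1) →₀ ℕ} (hB : (mon B : PR K n) ∈ I) :
    ∃ g : Fin (n+1) →₀ ℕ, g ≤ B ∧ MinGen I g ∧
      ∀ t : Fin (n+1), g t ≠ B t → maxIdx g ≤ t := by
  classical
  set Cand : Finset (Fin (n+1) →₀ ℕ) :=
    (Finset.Iic B).filter (fun g => (mon g : PR K n) ∈ I ∧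
      ∃ t : Fin (n+1), (∀ s, s < t → g s = B s) ∧ (∀ s, t < s → g s = 0)) with hCand
  have hBC : B ∈ Cand := by
    rw [hCand, mem_filter, Finset.mem_Iic]
    exact ⟨le_rfl, hB, Fin.last n, fun s _ => rfl,
      fun s hs => absurd hs (Fin.le_last s).not_gt⟩
  obtain ⟨g, hgC, hgmin⟩ := Cand.exists_min_image (fun g => ∑ t, g t) ⟨B, hBC⟩
  rw [hCand, mem_filter, Finset.mem_Iic] at hgC
  obtain ⟨hgB, hgI, t, ht1, ht2⟩ := hgC
  have htail : ∀ s : Fin (n+1), g s ≠ B s → maxIdx g ≤ s := by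
    intro s hs
    have hts : t ≤ s := not_lt.1 fun h => hs (ht1 s h)
    refine le_trans (EK.maxIdx_le fun u hu => ?_) hts
    by_contra h
    exact hu (ht2 u (not_le.1 h))
  refine ⟨g, hgB, ⟨hgI, ?_⟩, htail⟩
  intro C hCg hCne
  by_contra hCI
  by_cases hC0 : C = 0
  · subst hC0
    have h0C : (0 : Fin (n+1) →₀ ℕ) ∈ Cand := by
      rw [hCand, mem_filter, Finset.mem_Iic]
      exact ⟨zero_le, hCI, 0,
        fun s hs => absurd hs (not_lt.2 (Fin.zero_le s)), fun s _ => rfl⟩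
    have hg0 : (∑ u, g u) = 0 :=
      le_antisymm (by simpa using hgmin 0 h0C) zero_le
    exact hCne (EK.eq_zero_of_sum_eq_zero hg0).symm
  · set s := maxIdx C with hs
    have hCs : C s ≠ 0 := EK.apply_maxIdx_ne_zero hC0
    have hCsupp : ∀ u, s < u → C u = 0 := fun u hu => EK.eq_zero_of_maxIdx_lt hu
    have hCleB : C ≤ B := hCg.trans hgB
    have hst : s ≤ t := by
      by_contra h
      have h1 : C s ≤ g s := Finsupp.le_def.1 hCg s
      rw [ht2 s (not_le.1 h)] at h1
      exact hCs (Nat.le_zero.1 h1)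
    have hpre : ∀ u, u < s → g u = B u := fun u hu => ht1 u (hu.trans_le hst)
    -- the padded candidates
    set pad : ℕ → (Fin (n+1) →₀ ℕ) := fun e => Finsupp.equivFunOnFinite.symm
      (fun u => if u < s then B u else if u = s then e else 0) with hpad
    have hpadApp : ∀ e u, pad e u = if u < s then B u else if u = s then e else 0 :=
      fun e u => rfl
    have hpadC : ∀ e, e ≤ B s → (mon (pad e) : PR K n) ∈ I → pad e ∈ Cand := by
      intro e he hmem
      simp only [hCand, mem_filter, Finset.mem_Iic]
      refine ⟨Finsupp.le_def.2 fun u => ?_, hmem, s, fun u hu => ?_, fun u hu => ?_⟩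
      · rw [hpadApp]
        split_ifs with h1 h2
        · exact le_rfl
        · subst h2; exact he
        · exact Nat.zero_le _
      · rw [hpadApp, if_pos hu]
      · rw [hpadApp, if_neg (not_lt.2 hu.le), if_neg hu.ne']
    have hpadSum : ∀ e, (∑ u, pad e u) = (∑ u ∈ univ.filter (· < s), B u) + e := by
      intro e
      rw [← Finset.sum_filter_add_sum_filter_not univ (· < s) (pad e)]
      congr 1
      · exact Finset.sum_congr rfl fun u hu => by
          rw [hpadApp, if_pos (Finset.mem_filter.1 hu).2]
      · rw [Finset.sum_eq_single_of_mem s (by simp)]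
        · rw [hpadApp, if_neg (lt_irrefl s), if_pos rfl]
        · intro u hu hune
          rw [hpadApp, if_neg (Finset.mem_filter.1 hu).2, if_neg hune]
    have hdegg : (∑ u, g u) = (∑ u ∈ univ.filter (· < s), B u)
        + ∑ u ∈ univ.filter (¬ · < s), g u := by
      rw [← Finset.sum_filter_add_sum_filter_not univ (· < s) g]
      congr 1
      exact Finset.sum_congr rfl fun u hu => hpre u (Finset.mem_filter.1 hu).2
    -- compare with pad (C s)
    have hCpadle : C ≤ pad (C s) := by
      refine Finsupp.le_def.2 fun u => ?_
      rw [hpadApp]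
      split_ifs with h1 h2
      · exact Finsupp.le_def.1 hCleB u
      · subst h2; exact le_rfl
      · rw [hCsupp u (lt_of_le_of_ne (not_lt.1 h1) (Ne.symm h2))]
    have hmem1 : (mon (pad (C s)) : PR K n) ∈ I := EK.mon_mem_of_le hCI hCpadle
    have hC1 : pad (C s) ∈ Cand := hpadC _ (Finsupp.le_def.1 hCleB s) hmem1
    have hmin1 := hgmin _ hC1
    rw [hpadSum] at hmin1
    rw [hdegg] at hmin1
    have hle1 : (∑ u ∈ univ.filter (¬ · < s), g u) ≤ C s := by omega
    have hsge : C s ≤ ∑ u ∈ univ.filter (¬ · < s), g u := by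
      refine le_trans (Finsupp.le_def.1 hCg s) ?_
      exact Finset.single_le_sum (fun u _ => Nat.zero_le _) (by simp)
    have hsums : (∑ u ∈ univ.filter (¬ · < s), g u) = C s := le_antisymm hle1 hsge
    have hgs : g s = C s := le_antisymm (by
        calc g s ≤ ∑ u ∈ univ.filter (¬ · < s), g u :=
          Finset.single_le_sum (fun u _ => Nat.zero_le _) (by simp)
        _ = C s := hsums) (Finsupp.le_def.1 hCg s)
    have hgtail : ∀ u, s < u → g u = 0 := by
      intro u hu
      have herase : (∑ v ∈ (univ.filter (¬ · < s)).erase s, g v) = 0 := by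
        have := Finset.add_sum_erase (univ.filter (¬ · < s)) g (by simp : s ∈ _)
        omega
      refine Finset.sum_eq_zero_iff.1 herase u ?_
      simp only [Finset.mem_erase, Finset.mem_filter, Finset.mem_univ, true_and, not_lt]
      exact ⟨hu.ne', hu.le⟩
    by_cases hall : ∀ u, u < s → C u = g u
    · refine hCne (Finsupp.ext fun u => ?_)
      rcases lt_trichotomy u s with h | h | h
      · exact hall u h
      · subst h; rw [hgs]
      · rw [hCsupp u h, hgtail u h]
    · push_neg at hall
      obtain ⟨u, hus, hune⟩ := hall
      have hlt : C u < g u := lt_of_le_of_ne (Finsupp.le_def.1 hCg u) hune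
      have hguB : g u = B u := hpre u hus
      have hCuB : C u < B u := hguB ▸ hlt
      have hshift : (mon (shiftM C u (maxIdx C)) : PR K n) ∈ I :=
        hstab C hC0 hCI u (by rw [← hs]; exact hus)
      have hshiftApp : ∀ v, shiftM C u (maxIdx C) v
          = (C v + (if u = v then 1 else 0)) - (if s = v then 1 else 0) := by
        intro v
        rw [← hs]
        simp [shiftM, Finsupp.tsub_apply, Finsupp.add_apply, Finsupp.single_apply]
      have hC'le : shiftM C u (maxIdx C) ≤ pad (C s - 1) := by
        refine Finsupp.le_def.2 fun v => ?_
        rw [hshiftApp, hpadApp]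
        rcases lt_trichotomy v s with h | h | h
        · have h2 : s ≠ v := fun hh => absurd (hh ▸ h) (lt_irrefl _)
          rw [if_pos h, if_neg h2]
          by_cases hvu : u = v
          · rw [if_pos hvu]
            have hx : C v < B v := hvu ▸ hCuB
            omega
          · rw [if_neg hvu]
            have := Finsupp.le_def.1 hCleB v
            omega
        · have h1 : ¬ v < s := by rw [h]; exact lt_irrefl s
          have h2 : u ≠ v := by rw [h]; exact hus.ne
          rw [if_neg h1, if_pos h, if_neg h2, if_pos h.symm, h]
          omega
        · have h1 : ¬ v < s := not_lt.2 h.le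
          have h2 : v ≠ s := h.ne'
          have h3 : s ≠ v := h.ne
          have h4 : u ≠ v := (hus.trans h).ne
          rw [if_neg h4, if_neg h3, if_neg h1, if_neg h2]
          simp [hCsupp v h]
      have hmem2 : (mon (pad (C s - 1)) : PR K n) ∈ I := EK.mon_mem_of_le hshift hC'le
      have hC2 : pad (C s - 1) ∈ Cand :=
        hpadC _ (le_trans (Nat.sub_le _ _) (Finsupp.le_def.1 hCleB s)) hmem2
      have hmin2 := hgmin _ hC2
      rw [hpadSum] at hmin2
      rw [hdegg, hsums] at hmin2
      omega
end EKProof2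
section EKProof3
open Finset
variable {K : Type*} [Field K] {n : ℕ}

lemma EK.unique_gen {I : Ideal (PR K n)} {r : ℕ} {A : Fin r → (Fin (n+1) →₀ ℕ)}
    (hinj : Function.Injective A) (hgen : ∀ i, MinGen I (A i))
    {B : Fin (n+1) →₀ ℕ} {i i' : Fin r}
    (h1 : A i ≤ B) (t1 : ∀ t : Fin (n+1), A i t ≠ B t → maxIdx (A i) ≤ t)
    (h2 : A i' ≤ B) (t2 : ∀ t : Fin (n+1), A i' t ≠ B t → maxIdx (A i') ≤ t) :
    i = i' := by
  classical
  apply hinj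
  by_contra hne
  -- minimal differing index
  have hFne : (univ.filter (fun s : Fin (n+1) => A i s ≠ A i' s)).Nonempty := by
    by_contra h
    rw [Finset.not_nonempty_iff_eq_empty, Finset.filter_eq_empty_iff] at h
    exact hne (Finsupp.ext fun s => not_ne_iff.1 (h (mem_univ s)))
  set s₀ := (univ.filter (fun s : Fin (n+1) => A i s ≠ A i' s)).min' hFne with hs₀
  have hs₀mem := (univ.filter (fun s : Fin (n+1) => A i s ≠ A i' s)).min'_mem hFne
  rw [Finset.mem_filter] at hs₀mem
  have hpre : ∀ u, u < s₀ → A i u = A i' u := by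
    intro u hu
    by_contra h
    have : s₀ ≤ u := Finset.min'_le _ _ (Finset.mem_filter.2 ⟨mem_univ u, h⟩)
    omega
  have key : ∀ a b : Fin r, A a ≤ B →
      (∀ t : Fin (n+1), A b t ≠ B t → maxIdx (A b) ≤ t) →
      (∀ u, u < s₀ → A a u = A b u) → A b s₀ < A a s₀ → False := by
    intro a b ha tb hab hlt
    have hBs : A a s₀ ≤ B s₀ := Finsupp.le_def.1 ha s₀
    have hbB : A b s₀ ≠ B s₀ := by omega
    have hmax : maxIdx (A b) ≤ s₀ := tb s₀ hbB
    have hble : A b ≤ A a := by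
      refine Finsupp.le_def.2 fun u => ?_
      rcases lt_trichotomy u s₀ with h | h | h
      · rw [← hab u h]
      · rw [h]; exact hlt.le
      · rw [EK.eq_zero_of_maxIdx_lt (lt_of_le_of_lt hmax h)]
        exact Nat.zero_le _
    have hbne : A b ≠ A a := fun h => by rw [h] at hlt; omega
    exact (hgen a).2 (A b) hble hbne (hgen b).1
  rcases lt_or_gt_of_ne hs₀mem.2 with h | h
  · exact key i' i h2 t1 (fun u hu => (hpre u hu).symm) h
  · exact key i i' h1 t2 hpre h

end EKProof3
section EKProof4
open Finset

lemma EK.sum_eq_finsupp_sum {σ : Type*} [Fintype σ] (u : σ →₀ ℕ) :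
    u.sum (fun _ e => e) = ∑ t, u t :=
  Finsupp.sum_fintype _ _ (fun _ => rfl)

noncomputable def EK.degEquivSym (σ : Type*) [Fintype σ] [DecidableEq σ] (m : ℕ) :
    {u : σ →₀ ℕ // (∑ t, u t) = m} ≃ Sym σ m :=
  (Equiv.subtypeEquivRight (fun u => by
    rw [show (u.sum fun _ ↦ id) = u.sum (fun _ e => e) from rfl, EK.sum_eq_finsupp_sum]
    )).symm.trans (Sym.equivNatSum σ m).symm

lemma EK.card_deg (σ : Type*) [Fintype σ] [DecidableEq σ] (m : ℕ) :
    Nat.card {u : σ →₀ ℕ // (∑ t, u t) = m} = (Fintype.card σ + m - 1).choose m := by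
  rw [Nat.card_congr (EK.degEquivSym σ m), Nat.card_eq_fintype_card,
    Sym.card_sym_eq_multichoose, Nat.multichoose_eq]

lemma EK.finite_deg (σ : Type*) [Fintype σ] [DecidableEq σ] (m : ℕ)
    (p : (σ →₀ ℕ) → Prop) :
    Finite {u : σ →₀ ℕ // (∑ t, u t) = m ∧ p u} := by
  have h1 : Finite {u : σ →₀ ℕ // (∑ t, u t) = m} :=
    Finite.of_equiv _ (EK.degEquivSym σ m).symm
  exact Finite.of_injective
    (fun u => (⟨u.1, u.2.1⟩ : {u : σ →₀ ℕ // (∑ t, u t) = m}))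
    (by
      intro a b h
      apply Subtype.ext
      simpa using congrArg Subtype.val h)

variable {n : ℕ}

/-- reindexing equiv for tail-supported exponents -/
noncomputable def EK.tailEquiv (l : Fin (n+1)) (m : ℕ) :
    {u : Fin (n+1) →₀ ℕ // (∑ t, u t) = m ∧ ∀ t : Fin (n+1), u t ≠ 0 → l ≤ t}
      ≃ {v : {t : Fin (n+1) // l ≤ t} →₀ ℕ // (∑ t, v t) = m} := by
  classical
  refine
  { toFun := fun u => ⟨Finsupp.subtypeDomain _ u.1, ?_⟩
    invFun := fun v => ⟨Finsupp.extendDomain v.1, ?_, ?_⟩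
    left_inv := ?_
    right_inv := ?_ }
  · obtain ⟨u, hu, ht⟩ := u
    have h1 : ∑ t : {t : Fin (n+1) // l ≤ t}, u t.1
        = ∑ t ∈ univ.filter (fun t : Fin (n+1) => l ≤ t), u t :=
      (Finset.sum_subtype _ (fun t => by simp) _).symm
    have h2 : ∑ t ∈ univ.filter (fun t : Fin (n+1) => l ≤ t), u t = ∑ t, u t :=
      Finset.sum_filter_of_ne (fun t _ h => ht t h)
    simpa [Finsupp.subtypeDomain_apply] using h1.trans (h2.trans hu)
  · -- sum of extendDomain
    obtain ⟨v, hv⟩ := v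
    have h2 : ∑ t ∈ univ.filter (fun t : Fin (n+1) => l ≤ t), Finsupp.extendDomain v t
        = ∑ t : Fin (n+1), Finsupp.extendDomain v t :=
      Finset.sum_filter_of_ne (fun t _ h => by
        by_contra hc
        exact h (by rw [Finsupp.extendDomain_apply, dif_neg hc]))
    have h1 : ∑ t : {t : Fin (n+1) // l ≤ t}, Finsupp.extendDomain v t.1
        = ∑ t ∈ univ.filter (fun t : Fin (n+1) => l ≤ t), Finsupp.extendDomain v t :=
      (Finset.sum_subtype _ (fun t => by simp) _).symm
    have h3 : ∀ t : {t : Fin (n+1) // l ≤ t}, Finsupp.extendDomain v t.1 = v t := by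
      intro t
      rw [Finsupp.extendDomain_apply, dif_pos t.2]
    rw [← h2, ← h1]
    rw [Finset.sum_congr rfl (fun t _ => h3 t)]
    exact hv
  · -- tail condition of extendDomain
    intro t ht
    by_contra hc
    rw [Finsupp.extendDomain_apply, dif_neg hc] at ht
    exact ht rfl
  · rintro ⟨u, hu, ht⟩
    refine Subtype.ext ?_
    exact Finsupp.extendDomain_subtypeDomain u
      (fun a ha => ht a (Finsupp.mem_support_iff.1 ha))
  · rintro ⟨v, hv⟩
    exact Subtype.ext (Finsupp.subtypeDomain_extendDomain v)

noncomputable def EK.subEquivFin (l : Fin (n+1)) :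
    {t : Fin (n+1) // l ≤ t} ≃ Fin (n + 1 - (l : ℕ)) where
  toFun t := ⟨(t.1 : ℕ) - (l : ℕ), by omega⟩
  invFun s := ⟨⟨(s : ℕ) + (l : ℕ), by omega⟩, by
    rw [Fin.le_def]; simp⟩
  left_inv t := by
    have := t.2
    rw [Fin.le_def] at this
    apply Subtype.ext
    apply Fin.ext
    simp
    omega
  right_inv s := by
    apply Fin.ext
    simp

lemma EK.card_tail (l : Fin (n+1)) (m : ℕ) :
    Nat.card {u : Fin (n+1) →₀ ℕ // (∑ t, u t) = m ∧ ∀ t : Fin (n+1), u t ≠ 0 → l ≤ t}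
      = (n - (l : ℕ) + m).choose m := by
  classical
  rw [Nat.card_congr (EK.tailEquiv l m), EK.card_deg,
    Fintype.card_congr (EK.subEquivFin l), Fintype.card_fin]
  congr 1
  omega

end EKProof4
section EKProof5
open Finset
variable {K : Type*} [Field K] {n : ℕ}

lemma EK.card_div {I : Ideal (PR K n)} (hstab : Stable I)
    {r : ℕ} {A : Fin r → (Fin (n+1) →₀ ℕ)} (hinj : Function.Injective A)
    (hspan : I = Ideal.span (Set.range fun i => (mon (A i) : PR K n)))
    (hgen : ∀ i, MinGen I (A i)) (j : ℕ) (hj : ∀ i, mdeg (A i) ≤ j) :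
    Nat.card {B : Fin (n+1) →₀ ℕ // (∑ t, B t) = j ∧ ∃ i, A i ≤ B}
      = ∑ i : Fin r, Nat.card {u : Fin (n+1) →₀ ℕ //
          (∑ t, u t) = j - mdeg (A i) ∧ ∀ t : Fin (n+1), u t ≠ 0 → maxIdx (A i) ≤ t} := by
  classical
  have hmdeg : ∀ a : Fin (n+1) →₀ ℕ, mdeg a = ∑ t, a t := fun a => rfl
  set U : Fin r → Type _ := fun i => {u : Fin (n+1) →₀ ℕ //
      (∑ t, u t) = j - mdeg (A i) ∧ ∀ t : Fin (n+1), u t ≠ 0 → maxIdx (A i) ≤ t} with hU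
  set G : (Σ i : Fin r, U i) → {B : Fin (n+1) →₀ ℕ // (∑ t, B t) = j ∧ ∃ i, A i ≤ B} :=
    fun x => ⟨A x.1 + x.2.1, by
      rw [show (∑ t, (A x.1 + x.2.1 : Fin (n+1) →₀ ℕ) t) = (∑ t, A x.1 t) + ∑ t, x.2.1 t by
        rw [← Finset.sum_add_distrib]; exact Finset.sum_congr rfl fun t _ => Finsupp.add_apply _ _ _]
      have h1 := x.2.2.1
      have h2 := hj x.1
      rw [← hmdeg]
      omega,
      ⟨x.1, Finsupp.le_def.2 fun t => by
        rw [Finsupp.add_apply]; exact Nat.le_add_right _ _⟩⟩ with hG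
  have hGinj : Function.Injective G := by
    rintro ⟨i, u, hu, htu⟩ ⟨i', u', hu', htu'⟩ h
    have hval : A i + u = A i' + u' := congrArg Subtype.val h
    have hii : i = i' := by
      refine EK.unique_gen hinj hgen (B := A i + u) ?_ ?_ ?_ ?_
      · exact Finsupp.le_def.2 fun t => by
          rw [Finsupp.add_apply]; exact Nat.le_add_right _ _
      · intro t ht
        rw [Finsupp.add_apply] at ht
        exact htu t (fun h0 => ht (by omega))
      · rw [hval]
        exact Finsupp.le_def.2 fun t => by
          rw [Finsupp.add_apply]; exact Nat.le_add_right _ _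
      · intro t ht
        rw [hval, Finsupp.add_apply] at ht
        exact htu' t (fun h0 => ht (by omega))
    subst hii
    have huu : u = u' := by
      have := add_left_cancel hval
      exact this
    subst huu
    rfl
  have hGsurj : Function.Surjective G := by
    rintro ⟨B, hBdeg, hBdiv⟩
    have hBI : (mon B : PR K n) ∈ I := by
      obtain ⟨i0, hle⟩ := hBdiv
      refine EK.mon_mem_of_le ?_ hle
      rw [hspan]
      exact Ideal.subset_span ⟨i0, rfl⟩
    obtain ⟨g, hgB, hgMin, hgtail⟩ := EK.exists_gen hstab hBI
    have hgI : (mon g : PR K n) ∈ I := hgMin.1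
    rw [hspan] at hgI
    obtain ⟨i, hig⟩ := (EK.mon_mem_span_iff A g).1 hgI
    have hAg : A i = g := by
      by_contra hne
      exact (hgMin.2 (A i) hig hne) ((hgen i).1)
    subst hAg
    set u : Fin (n+1) →₀ ℕ := B - A i with hu
    have huapp : ∀ t, u t = B t - A i t := fun t => Finsupp.tsub_apply _ _ _
    have husum : (∑ t, u t) = j - mdeg (A i) := by
      rw [hmdeg]
      have : (∑ t, u t) = (∑ t, B t) - ∑ t, A i t := by
        rw [hu]
        exact Finset.sum_tsub_distrib _ (fun t _ => Finsupp.le_def.1 hgB t)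
      rw [this, hBdeg]
    have hutail : ∀ t : Fin (n+1), u t ≠ 0 → maxIdx (A i) ≤ t := by
      intro t ht
      refine hgtail t ?_
      rw [huapp] at ht
      omega
    refine ⟨⟨i, ⟨u, husum, hutail⟩⟩, ?_⟩
    apply Subtype.ext
    show A i + u = B
    rw [hu]
    exact add_tsub_cancel_of_le hgB
  haveI hfin : ∀ i, Finite (U i) := fun i => EK.finite_deg _ _ _
  haveI : ∀ i, Fintype (U i) := fun i => Fintype.ofFinite _
  rw [Nat.card_congr (Equiv.ofBijective G ⟨hGinj, hGsurj⟩).symm,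
    Nat.card_eq_fintype_card, Fintype.card_sigma]
  exact Finset.sum_congr rfl fun i _ => (Nat.card_eq_fintype_card).symm

end EKProof5
section EKProof6
open Finset
variable {K : Type*} [Field K] {n : ℕ}

lemma EK.degree_eq_sum (d : Fin (n+1) →₀ ℕ) : d.degree = ∑ t, d t :=
  Finset.sum_subset (Finset.subset_univ _)
    (fun t _ ht => Finsupp.notMem_support_iff.1 ht)

lemma EK.homSub_eq_span (j : ℕ) :
    homogeneousSubmodule (Fin (n+1)) K j
      = Submodule.span K ((fun B => (mon B : PR K n)) '' {B | (∑ t, B t) = j}) := by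
  apply le_antisymm
  · intro f hf
    rw [homogeneousSubmodule_eq_finsupp_supported, AddMonoidAlgebra.mem_supported] at hf
    rw [← support_sum_monomial_coeff f]
    apply Submodule.sum_mem
    intro d hd
    have h1 : (monomial d (coeff d f) : PR K n) = coeff d f • mon d := by
      rw [mon, smul_monomial, smul_eq_mul, mul_one]
    rw [h1]
    refine Submodule.smul_mem _ _ (Submodule.subset_span ⟨d, ?_, rfl⟩)
    have := hf hd
    rwa [Set.mem_setOf_eq, EK.degree_eq_sum] at this
  · rw [Submodule.span_le]
    rintro x ⟨B, hB, rfl⟩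
    rw [SetLike.mem_coe, mem_homogeneousSubmodule]
    exact isHomogeneous_monomial 1 (by rw [EK.degree_eq_sum]; exact hB)

lemma EK.hilbF_card (I : Ideal (PR K n)) {r : ℕ} {A : Fin r → (Fin (n+1) →₀ ℕ)}
    (hspan : I = Ideal.span (Set.range fun i => (mon (A i) : PR K n))) (j : ℕ) :
    hilbF I j = Nat.card {B : Fin (n+1) →₀ ℕ // (∑ t, B t) = j ∧ ¬ ∃ i, A i ≤ B} := by
  classical
  haveI hfin : Finite {B : Fin (n+1) →₀ ℕ // (∑ t, B t) = j ∧ ¬ ∃ i, A i ≤ B} :=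
    EK.finite_deg _ _ _
  haveI : Fintype {B : Fin (n+1) →₀ ℕ // (∑ t, B t) = j ∧ ¬ ∃ i, A i ≤ B} :=
    Fintype.ofFinite _
  set φ := (Ideal.Quotient.mkₐ K I).toLinearMap with hφ
  have hphi : ∀ f : PR K n, φ f = Ideal.Quotient.mk I f := by
    intro f
    rw [hφ, AlgHom.toLinearMap_apply, Ideal.Quotient.mkₐ_eq_mk]
  set v : {B : Fin (n+1) →₀ ℕ // (∑ t, B t) = j ∧ ¬ ∃ i, A i ≤ B} → (PR K n) ⧸ I :=
    fun B => φ (mon B.1) with hv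
  have hmem0 : ∀ B : Fin (n+1) →₀ ℕ, (∃ i, A i ≤ B) → (mon B : PR K n) ∈ I := by
    rintro B ⟨i, hle⟩
    refine EK.mon_mem_of_le ?_ hle
    rw [hspan]
    exact Ideal.subset_span ⟨i, rfl⟩
  have hindep : LinearIndependent K v := by
    rw [Fintype.linearIndependent_iff]
    intro c hc B₀
    by_contra hc0
    set f : PR K n := ∑ B, c B • mon B.1 with hf
    have hφf : φ f = 0 := by
      rw [hf, map_sum]
      simp only [map_smul]
      exact hc
    have hfI : f ∈ I := by
      rw [hphi] at hφf
      exact Ideal.Quotient.eq_zero_iff_mem.1 hφf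
    have hcoeff : coeff B₀.1 f = c B₀ := by
      rw [hf, coeff_sum]
      have h2 : ∀ B, coeff B₀.1 (c B • (mon B.1 : PR K n))
          = c B * (if B.1 = B₀.1 then 1 else 0) := by
        intro B
        rw [coeff_smul, mon, coeff_monomial, smul_eq_mul]
      rw [Finset.sum_congr rfl (fun B _ => h2 B)]
      rw [Finset.sum_eq_single B₀]
      · rw [if_pos rfl, mul_one]
      · intro B _ hne
        rw [if_neg (fun h => hne (Subtype.ext h)), mul_zero]
      · intro h
        exact absurd (Finset.mem_univ B₀) h
    have hsupp : B₀.1 ∈ f.support := by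
      rw [MvPolynomial.mem_support_iff, hcoeff]
      exact hc0
    rw [hspan, EK.range_eq, MvPolynomial.mem_ideal_span_monomial_image] at hfI
    obtain ⟨si, hsi, hle⟩ := hfI _ hsupp
    obtain ⟨i, rfl⟩ := hsi
    exact B₀.2.2 ⟨i, hle⟩
  have h2 : Submodule.span K (⇑φ '' ((fun B => (mon B : PR K n)) '' {B | (∑ t, B t) = j}))
      = Submodule.span K (Set.range v) := by
    apply le_antisymm
    · rw [Submodule.span_le]
      rintro x ⟨y, ⟨B, hB, rfl⟩, rfl⟩
      by_cases hd : ∃ i, A i ≤ B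
      · have h0 : φ (mon B) = 0 := by
          rw [hphi]
          exact Ideal.Quotient.eq_zero_iff_mem.2 (hmem0 B hd)
        rw [h0]
        exact Submodule.zero_mem _
      · exact Submodule.subset_span ⟨⟨B, hB, hd⟩, rfl⟩
    · rw [Submodule.span_le]
      rintro x ⟨B, rfl⟩
      exact Submodule.subset_span ⟨mon B.1, ⟨B.1, B.2.1, rfl⟩, rfl⟩
  show Module.finrank K ((homogeneousSubmodule (Fin (n+1)) K j).map φ) = _
  rw [EK.homSub_eq_span, Submodule.map_span, h2, finrank_span_eq_card hindep,
    Nat.card_eq_fintype_card]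

end EKProof6
section EKProof7
open Finset

lemma EK.card_split {n : ℕ} (j : ℕ) (q : (Fin (n+1) →₀ ℕ) → Prop) :
    Nat.card {B : Fin (n+1) →₀ ℕ // (∑ t, B t) = j ∧ ¬ q B}
      + Nat.card {B : Fin (n+1) →₀ ℕ // (∑ t, B t) = j ∧ q B}
      = Nat.card {B : Fin (n+1) →₀ ℕ // (∑ t, B t) = j} := by
  classical
  haveI h1 : Finite {B : Fin (n+1) →₀ ℕ // (∑ t, B t) = j ∧ ¬ q B} := EK.finite_deg _ _ _
  haveI h2 : Finite {B : Fin (n+1) →₀ ℕ // (∑ t, B t) = j ∧ q B} := EK.finite_deg _ _ _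
  have e1 : {x : {B : Fin (n+1) →₀ ℕ // (∑ t, B t) = j} // ¬ q x.1}
      ≃ {B : Fin (n+1) →₀ ℕ // (∑ t, B t) = j ∧ ¬ q B} :=
    Equiv.subtypeSubtypeEquivSubtypeInter (fun B : Fin (n+1) →₀ ℕ => (∑ t, B t) = j)
      (fun B => ¬ q B)
  have e2 : {x : {B : Fin (n+1) →₀ ℕ // (∑ t, B t) = j} // q x.1}
      ≃ {B : Fin (n+1) →₀ ℕ // (∑ t, B t) = j ∧ q B} :=
    Equiv.subtypeSubtypeEquivSubtypeInter (fun B : Fin (n+1) →₀ ℕ => (∑ t, B t) = j) q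
  have e3 : {x : {B : Fin (n+1) →₀ ℕ // (∑ t, B t) = j} // q x.1}
      ⊕ {x : {B : Fin (n+1) →₀ ℕ // (∑ t, B t) = j} // ¬ q x.1}
      ≃ {B : Fin (n+1) →₀ ℕ // (∑ t, B t) = j} :=
    Equiv.sumCompl _
  rw [← Nat.card_congr e1, ← Nat.card_congr e2, ← Nat.card_congr e3]
  haveI : Finite {x : {B : Fin (n+1) →₀ ℕ // (∑ t, B t) = j} // q x.1} := Finite.of_equiv _ e2.symm
  haveI : Finite {x : {B : Fin (n+1) →₀ ℕ // (∑ t, B t) = j} // ¬ q x.1} := Finite.of_equiv _ e1.symm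
  rw [Nat.card_sum, Nat.add_comm]

lemma EK.prod_cast (a k : ℕ) :
    (∏ t ∈ Finset.range k, ((a:ℚ) - t)) = a.descFactorial k := by
  induction k with
  | zero => simp
  | succ k ih =>
    rw [Finset.prod_range_succ, ih, Nat.descFactorial_succ, Nat.cast_mul]
    by_cases h : k ≤ a
    · rw [Nat.cast_sub h]
      ring
    · have h1 : a.descFactorial k = 0 := Nat.descFactorial_eq_zero_iff_lt.2 (by omega)
      rw [h1]
      simp

lemma EK.choosePoly_eval (q : Polynomial ℚ) (k : ℕ) (x : ℚ) (a : ℕ) (hx : q.eval x = a) :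
    (choosePoly q k).eval x = a.choose k := by
  rw [choosePoly, Polynomial.eval_smul, Polynomial.eval_prod]
  simp only [Polynomial.eval_sub, Polynomial.eval_C, hx]
  rw [EK.prod_cast a k, Nat.descFactorial_eq_factorial_mul_choose, smul_eq_mul, Nat.cast_mul,
    ← mul_assoc, inv_mul_cancel₀ (by exact_mod_cast k.factorial_ne_zero), one_mul]

end EKProof7
/-- the Hilbert polynomial of a saturated stable monomial ideal in terms
of the degrees `d_i` and max indices `l_i` of its minimal generators:
`p_{R/I}(z) = C(z+n,n) − Σ_i C(z+n−d_i−l_i, n−l_i)`. -/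
theorem hilbPoly_of_saturated_stable
    {K : Type*} [Field K] {n : ℕ} (I : Ideal (PR K n))
    (hmono : IsMonomialIdeal I) (hstab : Stable I) (hsat : Saturated I)
    (r : ℕ) (A : Fin r → (Fin (n+1) →₀ ℕ)) (hinj : Function.Injective A)
    (hspan : I = Ideal.span (Set.range fun i => (mon (A i) : PR K n)))
    (hgen : ∀ i, MinGen I (A i)) :
    IsHilbPoly I
      (choosePoly (Polynomial.X + Polynomial.C (n : ℚ)) n
        - ∑ i : Fin r,
            choosePoly
              (Polynomial.X + Polynomial.C (n : ℚ) - Polynomial.C (mdeg (A i) : ℚ)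
                - Polynomial.C ((maxIdx (A i) : ℕ) : ℚ))
              (n - (maxIdx (A i) : ℕ))) := by
  classical
  refine ⟨Finset.univ.sup (fun i => mdeg (A i) + (maxIdx (A i) : ℕ)), ?_⟩
  intro j hj
  have hdl : ∀ i, mdeg (A i) + (maxIdx (A i) : ℕ) ≤ j :=
    fun i => le_trans (Finset.le_sup (f := fun i => mdeg (A i) + (maxIdx (A i) : ℕ)) (Finset.mem_univ i)) hj
  have hdj : ∀ i, mdeg (A i) ≤ j := fun i => le_trans (Nat.le_add_right _ _) (hdl i)
  have hln : ∀ i, (maxIdx (A i) : ℕ) ≤ n := fun i => by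
    have := (maxIdx (A i)).isLt
    omega
  -- counting results
  have hS := EK.hilbF_card I hspan j
  have hsplit := EK.card_split j (fun B => ∃ i, A i ≤ B)
  have hD := EK.card_div hstab hinj hspan hgen j hdj
  have hT := EK.card_deg (Fin (n+1)) j
  rw [Fintype.card_fin] at hT
  have hTval : Nat.card {B : Fin (n+1) →₀ ℕ // (∑ t, B t) = j} = (j + n).choose n := by
    rw [hT]
    have h1 : n + 1 + j - 1 = j + n := by omega
    rw [h1, ← Nat.choose_symm (Nat.le_add_right j n)]
    congr 1
    omega
  have hU : ∀ i, Nat.card {u : Fin (n+1) →₀ ℕ //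
      (∑ t, u t) = j - mdeg (A i) ∧ ∀ t : Fin (n+1), u t ≠ 0 → maxIdx (A i) ≤ t}
      = (j + n - mdeg (A i) - (maxIdx (A i) : ℕ)).choose (n - (maxIdx (A i) : ℕ)) := by
    intro i
    rw [EK.card_tail (maxIdx (A i)) (j - mdeg (A i))]
    have harg : n - (maxIdx (A i) : ℕ) + (j - mdeg (A i))
        = j + n - mdeg (A i) - (maxIdx (A i) : ℕ) := by
      have h1 := hdj i
      have h2 := hln i
      omega
    rw [harg]
    rw [← Nat.choose_symm (show j - mdeg (A i) ≤ j + n - mdeg (A i) - (maxIdx (A i) : ℕ) by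
      have h1 := hdl i
      have h2 := hln i
      omega)]
    congr 1
    have h1 := hdl i
    have h2 := hln i
    omega
  -- evaluate the polynomial
  rw [Polynomial.eval_sub, Polynomial.eval_finset_sum]
  have hev1 : (choosePoly (Polynomial.X + Polynomial.C (n : ℚ)) n).eval (j : ℚ)
      = ((j + n).choose n : ℚ) := by
    refine EK.choosePoly_eval _ _ _ _ ?_
    rw [Polynomial.eval_add, Polynomial.eval_X, Polynomial.eval_C]
    push_cast
    ring
  have hev2 : ∀ i : Fin r,
      (choosePoly (Polynomial.X + Polynomial.C (n : ℚ) - Polynomial.C (mdeg (A i) : ℚ)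
        - Polynomial.C ((maxIdx (A i) : ℕ) : ℚ)) (n - (maxIdx (A i) : ℕ))).eval (j : ℚ)
      = ((j + n - mdeg (A i) - (maxIdx (A i) : ℕ)).choose (n - (maxIdx (A i) : ℕ)) : ℚ) := by
    intro i
    refine EK.choosePoly_eval _ _ _ _ ?_
    simp only [Polynomial.eval_sub, Polynomial.eval_add, Polynomial.eval_X, Polynomial.eval_C]
    have h1 := hdl i
    have h2 := hln i
    rw [show j + n - mdeg (A i) - (maxIdx (A i) : ℕ)
      = j + n - (mdeg (A i) + (maxIdx (A i) : ℕ)) by omega]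
    rw [Nat.cast_sub (by omega), Nat.cast_add, Nat.cast_add]
    ring
  rw [hev1, Finset.sum_congr rfl (fun i _ => hev2 i)]
  have h5 : Nat.card {B : Fin (n+1) →₀ ℕ // (∑ t, B t) = j ∧ ∃ i, A i ≤ B}
      = ∑ i : Fin r, ((j + n - mdeg (A i) - (maxIdx (A i) : ℕ)).choose
          (n - (maxIdx (A i) : ℕ))) := by
    rw [hD]
    exact Finset.sum_congr rfl fun i _ => hU i
  have hkey : hilbF I j
      + ∑ i : Fin r, ((j + n - mdeg (A i) - (maxIdx (A i) : ℕ)).choose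
          (n - (maxIdx (A i) : ℕ)))
      = (j + n).choose n := by
    rw [hS, ← h5, ← hTval]
    exact hsplit
  have hcast := congrArg (fun x : ℕ => (x : ℚ)) hkey
  push_cast at hcast
  linarith
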